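/- Let (p₁, p₂, …, p_l, p_{l+1}) be pairwise coprime integers with 1 < p₁ < p₂ < … < p_l < p_{l+1} and l ≥ 3. Then κ(p₁, …, p_l) ≤ κ(p₁, …, p_l, p_{l+1}). -/

import Mathlib

open Finset

private lemma kappa_aux (m : ℕ) (p : Fin m → ℕ) (hp : ∀ i, 1 < p i)
    (e0 : ℤ) (p' : Fin m → ℕ)
    (heq : e0 * ∏ i, (p i : ℤ)
      + ∑ i, (∏ j ∈ Finset.univ.erase i, (p j : ℤ)) * (p' i : ℤ) = -1)
    (Δ : ℕ → ℤ)
    (hΔ : ∀ n : ℕ, Δ n = 1 + |e0| * n - ∑ i, ⌈(n * p' i : ℚ) / p i⌉) :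
    e0 < 0 ∧ ∀ n : ℕ, m * (∏ i, (p i : ℤ)).toNat ≤ n → 0 ≤ Δ n := by
  set Pl : ℤ := ∏ i, (p i : ℤ) with hPl
  have hppos : ∀ i, (0 : ℤ) < p i := fun i => by exact_mod_cast Nat.zero_lt_of_lt (hp i)
  have hPlpos : 0 < Pl := Finset.prod_pos fun i _ => hppos i
  have hsumnn : 0 ≤ ∑ i, (∏ j ∈ Finset.univ.erase i, (p j : ℤ)) * (p' i : ℤ) :=
    Finset.sum_nonneg fun i _ => by positivity
  have he0 : e0 < 0 := by nlinarith
  refine ⟨he0, fun n hn => ?_⟩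
  -- work in ℚ
  have hA : ∀ i : Fin m, (p i : ℤ) * (∏ j ∈ Finset.univ.erase i, (p j : ℤ)) = Pl :=
    fun i => by rw [hPl]; exact Finset.mul_prod_erase univ (fun j => (p j : ℤ)) (mem_univ i)
  have hPlQ : (0:ℚ) < (Pl : ℚ) := by exact_mod_cast hPlpos
  have hterm : ∀ i : Fin m, ((n : ℚ) * p' i) / p i
      = (n : ℚ) * ((∏ j ∈ Finset.univ.erase i, (p j : ℤ)) * (p' i : ℤ) : ℤ) / Pl := by
    intro i
    have h1 : ((p i : ℚ)) ≠ 0 := by exact_mod_cast (hppos i).ne'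
    have h2 : ((Pl : ℚ)) ≠ 0 := hPlQ.ne'
    rw [div_eq_div_iff h1 h2]
    have := hA i
    push_cast
    have hcast : ((p i : ℚ)) * (∏ j ∈ Finset.univ.erase i, (p j : ℚ)) = (Pl : ℚ) := by
      exact_mod_cast this
    linear_combination (-(n : ℚ) * p' i) * hcast
  have hsum : ∑ i, ((n : ℚ) * p' i) / p i = (n : ℚ) * (-1 - e0 * Pl) / Pl := by
    rw [Finset.sum_congr rfl fun i _ => hterm i]
    rw [← Finset.sum_div, ← Finset.mul_sum]
    congr 2
    have : (∑ i, (∏ j ∈ Finset.univ.erase i, (p j : ℤ)) * (p' i : ℤ)) = -1 - e0 * Pl := by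
      linarith [heq]
    exact_mod_cast congrArg (Int.cast : ℤ → ℚ) this
  have hceil : ∀ i : Fin m, (⌈((n : ℚ) * p' i) / p i⌉ : ℚ) ≤ ((n : ℚ) * p' i) / p i + 1 :=
    fun i => (Int.ceil_lt_add_one _).le
  have hsumceil : ((∑ i, ⌈((n : ℚ) * p' i) / p i⌉ : ℤ) : ℚ)
      ≤ (n : ℚ) * (-1 - e0 * Pl) / Pl + m := by
    push_cast
    calc ∑ i, (⌈((n : ℚ) * p' i) / p i⌉ : ℚ) ≤ ∑ i, (((n : ℚ) * p' i) / p i + 1) :=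
          Finset.sum_le_sum fun i _ => hceil i
      _ = (n : ℚ) * (-1 - e0 * Pl) / Pl + m := by
          rw [Finset.sum_add_distrib, hsum]; simp [Finset.card_univ]
  -- now conclude
  have hnQ : (m : ℚ) * Pl ≤ n := by
    have h1 : ((m * Pl.toNat : ℕ) : ℚ) ≤ (n : ℚ) := by exact_mod_cast hn
    have h2 : ((Pl.toNat : ℤ)) = Pl := Int.toNat_of_nonneg hPlpos.le
    push_cast at h1
    rw [show ((Pl.toNat : ℚ)) = (Pl : ℚ) by exact_mod_cast h2] at h1
    exact h1
  have habs : |e0| = -e0 := abs_of_neg he0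
  rw [hΔ n]
  have : (0:ℚ) ≤ ((1 + |e0| * n - ∑ i, ⌈((n:ℚ) * p' i) / p i⌉ : ℤ) : ℚ) := by
    push_cast [habs]
    have expand : (n : ℚ) * (-1 - e0 * Pl) / Pl = -(n : ℚ)/Pl - e0 * n := by
      field_simp
    rw [expand] at hsumceil
    push_cast at hsumceil
    have hdiv : (m : ℚ) ≤ (n : ℚ) / Pl := (le_div_iff₀ hPlQ).mpr (by linarith)
    rw [neg_div] at hsumceil
    linarith
  exact_mod_cast this

theorem stmt_13 (l : ℕ) (hl : 3 ≤ l) (p : Fin (l + 1) → ℕ)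
    (hp1 : ∀ i, 1 < p i) (hmono : StrictMono p)
    (hcop : ∀ i j, i ≠ j → Nat.Coprime (p i) (p j))
    -- data for the truncated tuple (p₁, …, p_l)
    (e0 : ℤ) (p' : Fin l → ℕ) (hp' : ∀ i : Fin l, p' i ≤ p i.castSucc - 1)
    (heq : e0 * ∏ i : Fin l, (p i.castSucc : ℤ)
      + ∑ i : Fin l, (∏ j ∈ Finset.univ.erase i, (p j.castSucc : ℤ)) * (p' i : ℤ) = -1)
    (Δ : ℕ → ℤ)
    (hΔ : ∀ n : ℕ, Δ n = 1 + |e0| * n - ∑ i : Fin l, ⌈(n * p' i : ℚ) / p i.castSucc⌉)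
    -- data for the full tuple (p₁, …, p_l, p_{l+1})
    (E0 : ℤ) (P' : Fin (l + 1) → ℕ) (hP' : ∀ i, P' i ≤ p i - 1)
    (hEq : E0 * ∏ i, (p i : ℤ)
      + ∑ i, (∏ j ∈ Finset.univ.erase i, (p j : ℤ)) * (P' i : ℤ) = -1)
    (Δ' : ℕ → ℤ)
    (hΔ' : ∀ n : ℕ, Δ' n = 1 + |E0| * n - ∑ i, ⌈(n * P' i : ℚ) / p i⌉) :
    |∑ᶠ n : ℕ, min 0 (Δ n)| ≤ |∑ᶠ n : ℕ, min 0 (Δ' n)| := by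
  classical
  obtain ⟨he0, hbd⟩ := kappa_aux l (fun i => p i.castSucc) (fun i => hp1 _) e0 p' heq Δ hΔ
  obtain ⟨hE0, hbd'⟩ := kappa_aux (l + 1) p hp1 E0 P' hEq Δ' hΔ'
  set q : ℕ := p (Fin.last l) with hq
  have hq1 : 1 < q := hp1 _
  have hq0 : 0 < q := Nat.zero_lt_of_lt hq1
  set Pl : ℤ := ∏ i : Fin l, (p i.castSucc : ℤ) with hPl
  set PP : ℤ := ∏ i : Fin (l + 1), (p i : ℤ) with hPP
  have hppos : ∀ i : Fin (l + 1), (0 : ℤ) < p i := fun i => by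
    exact_mod_cast Nat.zero_lt_of_lt (hp1 i)
  have hPlpos : 0 < Pl := Finset.prod_pos fun i _ => hppos _
  have hPPeq : PP = Pl * q := by
    rw [hPP, hPl, Fin.prod_univ_castSucc]
  set A : Fin l → ℤ := fun i => ∏ j ∈ Finset.univ.erase i, (p j.castSucc : ℤ) with hAdef
  set B : Fin (l + 1) → ℤ := fun i => ∏ j ∈ Finset.univ.erase i, (p j : ℤ) with hBdef
  have hA : ∀ i : Fin l, (p i.castSucc : ℤ) * A i = Pl := fun i => by
    rw [hAdef, hPl]; exact Finset.mul_prod_erase Finset.univ (fun j => (p j.castSucc : ℤ))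
      (Finset.mem_univ i)
  have hB : ∀ i : Fin (l + 1), (p i : ℤ) * B i = PP := fun i => by
    rw [hBdef, hPP]; exact Finset.mul_prod_erase Finset.univ (fun j => (p j : ℤ))
      (Finset.mem_univ i)
  have hBA : ∀ j : Fin l, B j.castSucc = A j * q := by
    intro j
    have h1 : (p j.castSucc : ℤ) * B j.castSucc = (p j.castSucc : ℤ) * (A j * q) := by
      rw [hB, hPPeq, ← hA j]; ring
    exact mul_left_cancel₀ (hppos j.castSucc).ne' h1
  have hBlast : B (Fin.last l) = Pl := by
    have h1 : (q : ℤ) * B (Fin.last l) = (q : ℤ) * Pl := by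
      rw [show ((q : ℕ) : ℤ) = (p (Fin.last l) : ℤ) from rfl, hB, hPPeq]; ring
    exact mul_left_cancel₀ (by exact_mod_cast hq0.ne') h1
  -- key congruence:  p j ∣ q * P' j - p' j
  have hdvd : ∀ j : Fin l, (p j.castSucc : ℤ) ∣ (q : ℤ) * P' j.castSucc - p' j := by
    intro j
    have key1 : (p j.castSucc : ℤ) ∣ A j * p' j + 1 := by
      have hsplit : A j * (p' j : ℤ) + ∑ i ∈ Finset.univ.erase j, A i * (p' i : ℤ)
          = ∑ i : Fin l, A i * (p' i : ℤ) :=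
        Finset.add_sum_erase Finset.univ (fun i => A i * (p' i : ℤ)) (Finset.mem_univ j)
      have hrw : A j * (p' j : ℤ) + 1
          = -(e0 * Pl) - ∑ i ∈ Finset.univ.erase j, A i * (p' i : ℤ) := by
        simp only [hAdef] at hsplit ⊢; linarith [heq, hsplit]
      rw [hrw]
      refine dvd_sub (dvd_neg.mpr (Dvd.dvd.mul_left ⟨A j, (hA j).symm⟩ e0)) ?_
      refine Finset.dvd_sum fun i hi => ?_
      have hij : j ≠ i := fun h => (Finset.mem_erase.mp hi).1 h.symm
      exact Dvd.dvd.mul_right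
        (Finset.dvd_prod_of_mem (fun k => (p k.castSucc : ℤ))
          (Finset.mem_erase.mpr ⟨hij, Finset.mem_univ j⟩)) _
    have key2 : (p j.castSucc : ℤ) ∣ B j.castSucc * P' j.castSucc + 1 := by
      have hsplit : B j.castSucc * (P' j.castSucc : ℤ)
          + ∑ i ∈ Finset.univ.erase j.castSucc, B i * (P' i : ℤ)
          = ∑ i : Fin (l + 1), B i * (P' i : ℤ) :=
        Finset.add_sum_erase Finset.univ (fun i => B i * (P' i : ℤ)) (Finset.mem_univ j.castSucc)
      have hrw : B j.castSucc * (P' j.castSucc : ℤ) + 1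
          = -(E0 * PP) - ∑ i ∈ Finset.univ.erase j.castSucc, B i * (P' i : ℤ) := by
        simp only [hBdef] at hsplit ⊢; linarith [hEq, hsplit]
      rw [hrw]
      refine dvd_sub (dvd_neg.mpr (Dvd.dvd.mul_left ⟨B j.castSucc, (hB j.castSucc).symm⟩ E0)) ?_
      refine Finset.dvd_sum fun i hi => ?_
      have hij : j.castSucc ≠ i := fun h => (Finset.mem_erase.mp hi).1 h.symm
      exact Dvd.dvd.mul_right
        (Finset.dvd_prod_of_mem (fun k => (p k : ℤ))
          (Finset.mem_erase.mpr ⟨hij, Finset.mem_univ _⟩)) _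
    have hmul : (p j.castSucc : ℤ) ∣ A j * ((q : ℤ) * P' j.castSucc - p' j) := by
      have : A j * ((q : ℤ) * P' j.castSucc - p' j)
          = (B j.castSucc * P' j.castSucc + 1) - (A j * p' j + 1) := by
        rw [hBA j]; ring
      rw [this]
      exact dvd_sub key2 key1
    have hcopA : IsCoprime ((p j.castSucc : ℕ) : ℤ) (A j) := by
      have hAnat : A j = ((∏ k ∈ Finset.univ.erase j, p k.castSucc : ℕ) : ℤ) := by
        rw [hAdef]; push_cast; rfl
      rw [hAnat]
      rw [Nat.isCoprime_iff_coprime]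
      refine Nat.Coprime.prod_right fun k hk => ?_
      refine hcop _ _ ?_
      have : j ≠ k := fun h => (Finset.mem_erase.mp hk).1 h.symm
      exact fun h => this (Fin.castSucc_injective l h)
    exact hcopA.dvd_of_dvd_mul_left hmul
  have : ∀ j : Fin l, ∃ c : ℤ, (q : ℤ) * P' j.castSucc - p' j = (p j.castSucc : ℤ) * c :=
    fun j => hdvd j
  choose k hk using this
  -- the star identity
  have hstar : e0 - E0 * q = (∑ j, k j) + (P' (Fin.last l) : ℤ) := by
    have h1 : e0 * Pl = -1 - ∑ j : Fin l, A j * (p' j : ℤ) := by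
      simp only [hAdef]; linarith [heq]
    have h2 : E0 * PP = -1 - ∑ j : Fin l, B j.castSucc * (P' j.castSucc : ℤ)
        - B (Fin.last l) * (P' (Fin.last l) : ℤ) := by
      have h := hEq
      rw [Fin.sum_univ_castSucc
        (fun i : Fin (l + 1) => (∏ j ∈ Finset.univ.erase i, (p j : ℤ)) * (P' i : ℤ))] at h
      simp only [hBdef]
      linarith
    have h3 : (e0 - E0 * q) * Pl
        = (∑ j : Fin l, B j.castSucc * (P' j.castSucc : ℤ) - ∑ j : Fin l, A j * (p' j : ℤ))
          + B (Fin.last l) * (P' (Fin.last l) : ℤ) := by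
      have : (e0 - E0 * q) * Pl = e0 * Pl - E0 * PP := by rw [hPPeq]; ring
      rw [this, h1, h2]; ring
    have h4 : ∑ j : Fin l, B j.castSucc * (P' j.castSucc : ℤ) - ∑ j : Fin l, A j * (p' j : ℤ)
        = ∑ j : Fin l, Pl * k j := by
      rw [← Finset.sum_sub_distrib]
      refine Finset.sum_congr rfl fun j _ => ?_
      have := hk j
      have hAj := hA j
      calc B j.castSucc * (P' j.castSucc : ℤ) - A j * (p' j : ℤ)
          = A j * ((q : ℤ) * P' j.castSucc - p' j) := by rw [hBA j]; ring
        _ = A j * ((p j.castSucc : ℤ) * k j) := by rw [this]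
        _ = Pl * k j := by rw [← hAj]; ring
    have h5 : (e0 - E0 * q) * Pl = ((∑ j, k j) + (P' (Fin.last l) : ℤ)) * Pl := by
      rw [h3, h4, hBlast, ← Finset.mul_sum]
      ring
    exact mul_right_cancel₀ hPlpos.ne' h5
  -- the main identity : Δ' (q * n) = Δ n
  have hmain : ∀ n : ℕ, Δ' (q * n) = Δ n := by
    intro n
    rw [hΔ' (q * n), hΔ n]
    have hceilj : ∀ j : Fin l, ⌈(((q * n : ℕ) : ℚ) * P' j.castSucc) / p j.castSucc⌉
        = n * k j + ⌈((n : ℚ) * p' j) / p j.castSucc⌉ := by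
      intro j
      have hpj : ((p j.castSucc : ℚ)) ≠ 0 := by
        exact_mod_cast (hppos j.castSucc).ne'
      have harg : (((q * n : ℕ) : ℚ) * P' j.castSucc) / p j.castSucc
          = ((n : ℚ) * p' j) / p j.castSucc + ((n * k j : ℤ) : ℚ) := by
        have hkQ : (q : ℚ) * (P' j.castSucc : ℚ) - (p' j : ℚ)
            = (p j.castSucc : ℚ) * (k j : ℚ) := by exact_mod_cast hk j
        field_simp
        push_cast
        linear_combination (n : ℚ) * hkQ
      rw [harg, Int.ceil_add_intCast]
      ring
    have hceillast : ⌈(((q * n : ℕ) : ℚ) * P' (Fin.last l)) / p (Fin.last l)⌉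
        = (n : ℤ) * P' (Fin.last l) := by
      have hqQ : ((q : ℚ)) ≠ 0 := by exact_mod_cast hq0.ne'
      have : (((q * n : ℕ) : ℚ) * P' (Fin.last l)) / p (Fin.last l)
          = (((n : ℤ) * P' (Fin.last l) : ℤ) : ℚ) := by
        rw [show ((p (Fin.last l) : ℚ)) = (q : ℚ) from rfl]
        push_cast
        field_simp
      rw [this, Int.ceil_intCast]
    rw [Fin.sum_univ_castSucc
      (fun i : Fin (l + 1) => ⌈(((q * n : ℕ) : ℚ) * P' i) / p i⌉)]
    rw [hceillast, Finset.sum_congr rfl fun j _ => hceilj j]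
    rw [Finset.sum_add_distrib]
    rw [abs_of_neg he0, abs_of_neg hE0]
    push_cast
    rw [← Finset.mul_sum]
    linear_combination (n : ℤ) * hstar
  -- now the finsum comparison
  set N : ℕ := l * Pl.toNat with hN
  set M : ℕ := max ((l + 1) * PP.toNat) (q * N) with hM
  have hsuppΔ : Function.support (fun n => min 0 (Δ n)) ⊆ ↑(Finset.range N) := by
    intro n hn
    simp only [Finset.coe_range, Set.mem_Iio]
    by_contra h
    exact hn (min_eq_left (hbd n (le_of_not_gt h)))
  have hsuppΔ' : Function.support (fun n => min 0 (Δ' n)) ⊆ ↑(Finset.range M) := by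
    intro n hn
    simp only [Finset.coe_range, Set.mem_Iio]
    by_contra h
    refine hn (min_eq_left (hbd' n ?_))
    exact le_trans (le_max_left _ _) (le_of_not_gt h)
  have hAval : ∑ᶠ n : ℕ, min 0 (Δ n) = ∑ n ∈ Finset.range N, min 0 (Δ n) :=
    finsum_eq_finset_sum_of_support_subset _ hsuppΔ
  have hBval : ∑ᶠ n : ℕ, min 0 (Δ' n) = ∑ n ∈ Finset.range M, min 0 (Δ' n) :=
    finsum_eq_finset_sum_of_support_subset _ hsuppΔ'
  have hsubset : (Finset.range N).image (fun n => q * n) ⊆ Finset.range M := by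
    intro m hm
    obtain ⟨n, hn, rfl⟩ := Finset.mem_image.mp hm
    rw [Finset.mem_range] at hn ⊢
    calc q * n < q * N := (Nat.mul_lt_mul_left hq0).mpr hn
      _ ≤ M := le_max_right _ _
  have himg : ∑ m ∈ (Finset.range N).image (fun n => q * n), min 0 (Δ' m)
      = ∑ n ∈ Finset.range N, min 0 (Δ n) := by
    rw [Finset.sum_image (fun a _ b _ h => Nat.eq_of_mul_eq_mul_left hq0 h)]
    exact Finset.sum_congr rfl fun n _ => by rw [hmain n]
  have hle : ∑ m ∈ Finset.range M, min 0 (Δ' m)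
      ≤ ∑ m ∈ (Finset.range N).image (fun n => q * n), min 0 (Δ' m) := by
    have h := Finset.sum_le_sum_of_subset_of_nonneg (f := fun m => -min 0 (Δ' m)) hsubset
      (fun i _ _ => by simp [min_le_left])
    simp only [Finset.sum_neg_distrib] at h
    linarith
  have hAnp : ∑ n ∈ Finset.range N, min 0 (Δ n) ≤ 0 :=
    Finset.sum_nonpos fun n _ => min_le_left _ _
  have hBnp : ∑ n ∈ Finset.range M, min 0 (Δ' n) ≤ 0 :=
    Finset.sum_nonpos fun n _ => min_le_left _ _
  rw [hAval, hBval, abs_of_nonpos hAnp, abs_of_nonpos hBnp]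
  have : ∑ m ∈ Finset.range M, min 0 (Δ' m) ≤ ∑ n ∈ Finset.range N, min 0 (Δ n) := by
    calc ∑ m ∈ Finset.range M, min 0 (Δ' m)
        ≤ ∑ m ∈ (Finset.range N).image (fun n => q * n), min 0 (Δ' m) := hle
      _ = ∑ n ∈ Finset.range N, min 0 (Δ n) := himg
  linarith
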